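/- arXiv:1207.5712 — 5 statements merged into one kernel-verified Lean document; each statement's English description precedes it below -/
import Mathlib

section
/- Let G be the simple graph on vertex set {1,...,7} with edge set E = {{1,2},{1,3},{1,4},{1,5},{1,7},{2,7},{3,5},{3,6},{4,5},{4,6},{4,7},{5,6},{6,7}} (the graph G1065 of the atlas). Then msr(G) = 4; that is, there exists a 7×7 Hermitian positive semidefinite complex matrix with graph G of rank 4, and every 7×7 Hermitian positive semidefinite complex matrix with graph G has rank at least 4. -/
open Matrix ComplexOrder

/-- The edge set of the graph G1065 on vertices 1,...,7. -/
def edgesG1065 : Set (Sym2 ℕ) :=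
  {s(1, 2), s(1, 3), s(1, 4), s(1, 5), s(1, 7), s(2, 7), s(3, 5), s(3, 6), s(4, 5), s(4, 6), s(4, 7), s(5, 6), s(6, 7)}

/-- `M` has graph G1065: for `i ≠ j`, `M i j ≠ 0` iff `{i+1, j+1}` is an edge of G1065. -/
def HasGraphG1065 (M : Matrix (Fin 7) (Fin 7) ℂ) : Prop :=
  ∀ i j : Fin 7, i ≠ j → (M i j ≠ 0 ↔ s((i : ℕ) + 1, (j : ℕ) + 1) ∈ edgesG1065)

private lemma memEdges_iff (a b : ℕ) :
    s(a,b) ∈ edgesG1065 ↔ (s(a,b) = s(1,2) ∨ s(a,b) = s(1,3) ∨ s(a,b) = s(1,4) ∨ s(a,b) = s(1,5) ∨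
      s(a,b) = s(1,7) ∨ s(a,b) = s(2,7) ∨ s(a,b) = s(3,5) ∨ s(a,b) = s(3,6) ∨ s(a,b) = s(4,5) ∨
      s(a,b) = s(4,6) ∨ s(a,b) = s(4,7) ∨ s(a,b) = s(5,6) ∨ s(a,b) = s(6,7)) := by
  simp [edgesG1065, Set.mem_insert_iff, Set.mem_singleton_iff]

private lemma rank_submatrix_le' {n m : ℕ} (M : Matrix (Fin n) (Fin n) ℂ) (r c : Fin m → Fin n) :
    (M.submatrix r c).rank ≤ M.rank := by
  have h : M.submatrix r c =
      (Matrix.of fun i j => if r i = j then (1:ℂ) else 0) * M *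
      (Matrix.of fun i j => if i = c j then (1:ℂ) else 0) := by
    ext i j
    simp [Matrix.mul_apply, Finset.sum_ite_eq, Finset.sum_ite_eq']
  rw [h]
  exact (Matrix.rank_mul_le_left _ _).trans (Matrix.rank_mul_le_right _ _)

private lemma lowerBound (M : Matrix (Fin 7) (Fin 7) ℂ) (hG : HasGraphG1065 M) : 4 ≤ M.rank := by
  have hz : ∀ i j : Fin 7, i ≠ j → s((i:ℕ)+1, (j:ℕ)+1) ∉ edgesG1065 → M i j = 0 := by
    intro i j hij hmem
    by_contra h
    exact hmem ((hG i j hij).mp h)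
  have e13 : M 1 3 = 0 := hz 1 3 (by decide) (by rw [memEdges_iff]; decide)
  have e14 : M 1 4 = 0 := hz 1 4 (by decide) (by rw [memEdges_iff]; decide)
  have e12 : M 1 2 = 0 := hz 1 2 (by decide) (by rw [memEdges_iff]; decide)
  have e64 : M 6 4 = 0 := hz 6 4 (by decide) (by rw [memEdges_iff]; decide)
  have e62 : M 6 2 = 0 := hz 6 2 (by decide) (by rw [memEdges_iff]; decide)
  have e32 : M 3 2 = 0 := hz 3 2 (by decide) (by rw [memEdges_iff]; decide)
  have d16 : M 1 6 ≠ 0 := (hG 1 6 (by decide)).mpr (by rw [memEdges_iff]; decide)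
  have d63 : M 6 3 ≠ 0 := (hG 6 3 (by decide)).mpr (by rw [memEdges_iff]; decide)
  have d34 : M 3 4 ≠ 0 := (hG 3 4 (by decide)).mpr (by rw [memEdges_iff]; decide)
  have d42 : M 4 2 ≠ 0 := (hG 4 2 (by decide)).mpr (by rw [memEdges_iff]; decide)
  set B := M.submatrix ![1,6,3,4] ![6,3,4,2] with hB
  have hdet : B.det = M 1 6 * M 6 3 * M 3 4 * M 4 2 := by
    simp [hB, -Matrix.submatrix_cons_row, Matrix.det_succ_row_zero, Fin.sum_univ_succ, e13, e14, e12, e64, e62, e32]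
    ring
  have hdne : B.det ≠ 0 := by
    rw [hdet]
    exact mul_ne_zero (mul_ne_zero (mul_ne_zero d16 d63) d34) d42
  have hrB : B.rank = 4 := by
    rw [Matrix.rank_of_isUnit B ((Matrix.isUnit_iff_isUnit_det B).mpr (isUnit_iff_ne_zero.mpr hdne))]
    simp
  calc (4:ℕ) = B.rank := hrB.symm
    _ ≤ M.rank := rank_submatrix_le' M _ _

private def NA : Matrix (Fin 4) (Fin 7) ℤ :=
  !![1,0,1,0,1,1,0; 1,0,0,1,1,1,0; -2,0,0,1,0,1,1; 1,1,0,0,0,0,1]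

private def NG : Matrix (Fin 7) (Fin 7) ℤ :=
  !![7,1,1,-1,2,0,-1; 1,1,0,0,0,0,1; 1,0,1,0,1,1,0;
     -1,0,0,2,1,2,1; 2,0,1,1,2,2,0; 0,0,1,2,2,3,1; -1,1,0,1,0,1,2]

private lemma NA_mul : NAᵀ * NA = NG := by decide

noncomputable def Amat : Matrix (Fin 4) (Fin 7) ℂ := NA.map (Int.cast : ℤ → ℂ)
noncomputable def Mmat : Matrix (Fin 7) (Fin 7) ℂ := NG.map (Int.cast : ℤ → ℂ)

private lemma Mmat_eq : Amatᴴ * Amat = Mmat := by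
  have h1 : Amatᴴ = NAᵀ.map (Int.cast : ℤ → ℂ) := by
    ext i j
    simp [Amat, Matrix.conjTranspose_apply, Matrix.map_apply, Matrix.transpose_apply]
  rw [h1, Amat, Mmat, ← NA_mul]
  exact (Matrix.map_mul (f := Int.castRingHom ℂ)).symm

private lemma Mmat_graph : HasGraphG1065 Mmat := by
  have key : ∀ i j : Fin 7, i ≠ j → (NG i j ≠ 0 ↔
      (s((i:ℕ)+1,(j:ℕ)+1) = s(1,2) ∨ s((i:ℕ)+1,(j:ℕ)+1) = s(1,3) ∨ s((i:ℕ)+1,(j:ℕ)+1) = s(1,4) ∨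
       s((i:ℕ)+1,(j:ℕ)+1) = s(1,5) ∨ s((i:ℕ)+1,(j:ℕ)+1) = s(1,7) ∨ s((i:ℕ)+1,(j:ℕ)+1) = s(2,7) ∨
       s((i:ℕ)+1,(j:ℕ)+1) = s(3,5) ∨ s((i:ℕ)+1,(j:ℕ)+1) = s(3,6) ∨ s((i:ℕ)+1,(j:ℕ)+1) = s(4,5) ∨
       s((i:ℕ)+1,(j:ℕ)+1) = s(4,6) ∨ s((i:ℕ)+1,(j:ℕ)+1) = s(4,7) ∨ s((i:ℕ)+1,(j:ℕ)+1) = s(5,6) ∨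
       s((i:ℕ)+1,(j:ℕ)+1) = s(6,7))) := by
    letI : ∀ a b : Fin 7, Decidable (NG a b = 0) := fun a b => Int.decEq _ _
    decide
  intro i j hij
  rw [Mmat, Matrix.map_apply, ne_eq, Int.cast_eq_zero, ← ne_eq, memEdges_iff]
  exact key i j hij

/-- msr(G1065) = 4. -/
theorem msr_G1065 :
    (∃ M : Matrix (Fin 7) (Fin 7) ℂ, M.PosSemidef ∧ HasGraphG1065 M ∧ M.rank = 4) ∧
    (∀ M : Matrix (Fin 7) (Fin 7) ℂ, M.PosSemidef → HasGraphG1065 M → 4 ≤ M.rank) := by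
  constructor
  · refine ⟨Mmat, ?_, Mmat_graph, ?_⟩
    · rw [← Mmat_eq]
      exact Matrix.posSemidef_conjTranspose_mul_self Amat
    · refine le_antisymm ?_ (lowerBound Mmat Mmat_graph)
      calc Mmat.rank = (Amatᴴ * Amat).rank := by rw [Mmat_eq]
        _ = Amat.rank := Matrix.rank_conjTranspose_mul_self Amat
        _ ≤ 4 := by simpa using Amat.rank_le_card_height
  · exact fun M _ hG => lowerBound M hG
end

section
/- Let G be the simple graph on vertex set {1,...,7} with edge set E = {{1,2},{1,5},{1,6},{1,7},{2,3},{2,5},{2,6},{2,7},{3,4},{3,5},{4,5},{4,6},{4,7}} (the graph G1092 of the atlas). Then msr(G) = 4; that is, there exists a 7×7 Hermitian positive semidefinite complex matrix with graph G of rank 4, and every 7×7 Hermitian positive semidefinite complex matrix with graph G has rank at least 4. -/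
open Matrix ComplexOrder

/-- The edge set of the graph G1092 on vertices 1,...,7. -/
def edgesG1092 : Set (Sym2 ℕ) :=
  {s(1, 2), s(1, 5), s(1, 6), s(1, 7), s(2, 3), s(2, 5), s(2, 6), s(2, 7), s(3, 4), s(3, 5), s(4, 5), s(4, 6), s(4, 7)}

/-- `M` has graph G1092: for `i ≠ j`, `M i j ≠ 0` iff `{i+1, j+1}` is an edge of G1092. -/
def HasGraphG1092 (M : Matrix (Fin 7) (Fin 7) ℂ) : Prop :=
  ∀ i j : Fin 7, i ≠ j → (M i j ≠ 0 ↔ s((i : ℕ) + 1, (j : ℕ) + 1) ∈ edgesG1092)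

/- ### Auxiliary vector-indexing lemmas -/

lemma v7_0 {α : Type*} (a b c d e f g : α) : ![a,b,c,d,e,f,g] 0 = a := rfl
lemma v7_1 {α : Type*} (a b c d e f g : α) : ![a,b,c,d,e,f,g] 1 = b := rfl
lemma v7_2 {α : Type*} (a b c d e f g : α) : ![a,b,c,d,e,f,g] 2 = c := rfl
lemma v7_3 {α : Type*} (a b c d e f g : α) : ![a,b,c,d,e,f,g] 3 = d := rfl
lemma v7_4 {α : Type*} (a b c d e f g : α) : ![a,b,c,d,e,f,g] 4 = e := rfl
lemma v7_5 {α : Type*} (a b c d e f g : α) : ![a,b,c,d,e,f,g] 5 = f := rfl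
lemma v7_6 {α : Type*} (a b c d e f g : α) : ![a,b,c,d,e,f,g] 6 = g := rfl
lemma v4_0 {α : Type*} (a b c d : α) : ![a,b,c,d] 0 = a := rfl
lemma v4_1 {α : Type*} (a b c d : α) : ![a,b,c,d] 1 = b := rfl
lemma v4_2 {α : Type*} (a b c d : α) : ![a,b,c,d] 2 = c := rfl
lemma v4_3 {α : Type*} (a b c d : α) : ![a,b,c,d] 3 = d := rfl

/-- Rank of any (not necessarily principal) submatrix is at most the rank. -/
lemma rank_submatrix_le'_s7 {l m : Type*} [Fintype l] [Fintype m] [DecidableEq m]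
    (A : Matrix m m ℂ) (f g : l → m) : (A.submatrix f g).rank ≤ A.rank := by
  have h1 : ((1 : Matrix m m ℂ).submatrix f (Equiv.refl m)) * A = A.submatrix f id := by
    rw [Matrix.one_submatrix_mul]; rfl
  have h2 : (A.submatrix f id) * ((1 : Matrix m m ℂ).submatrix (Equiv.refl m) g)
      = A.submatrix f g := by
    rw [Matrix.mul_submatrix_one]; rfl
  calc (A.submatrix f g).rank
      = (((1 : Matrix m m ℂ).submatrix f (Equiv.refl m)) * A
          * ((1 : Matrix m m ℂ).submatrix (Equiv.refl m) g)).rank := by rw [h1, h2]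
    _ ≤ (((1 : Matrix m m ℂ).submatrix f (Equiv.refl m)) * A).rank := Matrix.rank_mul_le_left _ _
    _ ≤ A.rank := Matrix.rank_mul_le_right _ _

/-- In a PSD matrix, a nonzero off-diagonal entry forces a nonzero diagonal entry. -/
lemma diag_ne_of_entry_ne (M : Matrix (Fin 7) (Fin 7) ℂ) (hM : M.PosSemidef)
    (i j : Fin 7) (hij : M i j ≠ 0) : M j j ≠ 0 := by
  intro hjj
  apply hij
  have hq : star (fun k => if k = j then 1 else 0 : Fin 7 → ℂ) ⬝ᵥ
      M *ᵥ (fun k => if k = j then 1 else 0) = 0 := by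
    simp [dotProduct, Matrix.mulVec, Finset.sum_ite_eq', hjj]
  have h0 := congrFun ((hM.dotProduct_mulVec_zero_iff _).mp hq) i
  simpa [Matrix.mulVec, dotProduct, Finset.sum_ite_eq'] using h0

/-- The lower bound: every PSD matrix with graph G1092 has rank at least 4. -/
lemma lowerG1092 (M : Matrix (Fin 7) (Fin 7) ℂ) (hM : M.PosSemidef)
    (hG : HasGraphG1092 M) : 4 ≤ M.rank := by
  have herm : ∀ i j : Fin 7, star (M i j) = M j i := fun i j => congrFun (congrFun hM.1 j) i
  -- nonzero entries (edges)
  have h04 : M 0 4 ≠ 0 := (hG 0 4 (by decide)).mpr (by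
    simp only [edgesG1092, Set.mem_insert_iff, Set.mem_singleton_iff]; decide)
  have h24 : M 2 4 ≠ 0 := (hG 2 4 (by decide)).mpr (by
    simp only [edgesG1092, Set.mem_insert_iff, Set.mem_singleton_iff]; decide)
  have h05 : M 0 5 ≠ 0 := (hG 0 5 (by decide)).mpr (by
    simp only [edgesG1092, Set.mem_insert_iff, Set.mem_singleton_iff]; decide)
  have h06 : M 0 6 ≠ 0 := (hG 0 6 (by decide)).mpr (by
    simp only [edgesG1092, Set.mem_insert_iff, Set.mem_singleton_iff]; decide)
  have h42 : M 4 2 ≠ 0 := fun h => h24 (by rw [← herm 4 2, h, star_zero])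
  -- zero entries (non-edges)
  have z02 : M 0 2 = 0 := by
    by_contra h
    exact absurd ((hG 0 2 (by decide)).mp h) (by
      simp only [edgesG1092, Set.mem_insert_iff, Set.mem_singleton_iff]; decide)
  have z25 : M 2 5 = 0 := by
    by_contra h
    exact absurd ((hG 2 5 (by decide)).mp h) (by
      simp only [edgesG1092, Set.mem_insert_iff, Set.mem_singleton_iff]; decide)
  have z26 : M 2 6 = 0 := by
    by_contra h
    exact absurd ((hG 2 6 (by decide)).mp h) (by
      simp only [edgesG1092, Set.mem_insert_iff, Set.mem_singleton_iff]; decide)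
  have z45 : M 4 5 = 0 := by
    by_contra h
    exact absurd ((hG 4 5 (by decide)).mp h) (by
      simp only [edgesG1092, Set.mem_insert_iff, Set.mem_singleton_iff]; decide)
  have z46 : M 4 6 = 0 := by
    by_contra h
    exact absurd ((hG 4 6 (by decide)).mp h) (by
      simp only [edgesG1092, Set.mem_insert_iff, Set.mem_singleton_iff]; decide)
  have z56 : M 5 6 = 0 := by
    by_contra h
    exact absurd ((hG 5 6 (by decide)).mp h) (by
      simp only [edgesG1092, Set.mem_insert_iff, Set.mem_singleton_iff]; decide)
  have z52 : M 5 2 = 0 := by rw [← herm 2 5, z25, star_zero]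
  have z62 : M 6 2 = 0 := by rw [← herm 2 6, z26, star_zero]
  have z54 : M 5 4 = 0 := by rw [← herm 4 5, z45, star_zero]
  have z64 : M 6 4 = 0 := by rw [← herm 4 6, z46, star_zero]
  have z65 : M 6 5 = 0 := by rw [← herm 5 6, z56, star_zero]
  -- nonzero diagonal entries
  have h55 : M 5 5 ≠ 0 := diag_ne_of_entry_ne M hM 0 5 h05
  have h66 : M 6 6 ≠ 0 := diag_ne_of_entry_ne M hM 0 6 h06
  -- the key 2x2 determinant is nonzero
  have hd : M 2 2 * M 4 4 - M 2 4 * M 4 2 ≠ 0 := by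
    intro hd
    have h44s : star (M 4 4) = M 4 4 := herm 4 4
    have h42s : star (M 4 2) = M 2 4 := herm 4 2
    set w : Fin 7 → ℂ := fun i => if i = 2 then M 4 4 else if i = 4 then -(M 4 2) else 0 with hw
    have hq : star w ⬝ᵥ M *ᵥ w = 0 := by
      simp (config := { decide := true }) only [hw, dotProduct, Matrix.mulVec, Pi.star_apply,
        Fin.sum_univ_seven, if_true, if_false, star_zero, star_neg, h44s, h42s, mul_zero, zero_mul,
        add_zero, zero_add, mul_neg, neg_mul]
      linear_combination (M 4 4) * hd
    have h0 := congrFun ((hM.dotProduct_mulVec_zero_iff _).mp hq) 0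
    simp (config := { decide := true }) only [hw, Matrix.mulVec, dotProduct, Fin.sum_univ_seven,
      if_true, if_false, mul_zero, add_zero, zero_add, mul_neg, Pi.zero_apply, z02, zero_mul] at h0
    rcases mul_eq_zero.mp (neg_eq_zero.mp h0) with h | h
    · exact h04 h
    · exact h42 h
  -- the 4x4 submatrix on rows/columns {2,4,5,6} is invertible
  have hdet : (M.submatrix ![2,4,5,6] ![2,4,5,6]).det
      = (M 2 2 * M 4 4 - M 2 4 * M 4 2) * (M 5 5 * M 6 6) := by
    have hsub : M.submatrix ![2,4,5,6] ![2,4,5,6] = !![M 2 2, M 2 4, 0, 0; M 4 2, M 4 4, 0, 0;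
        0, 0, M 5 5, 0; 0, 0, 0, M 6 6] := by
      ext i j
      fin_cases i <;> fin_cases j <;> simp [z25, z26, z45, z46, z52, z62, z54, z64, z56, z65]
    rw [hsub]
    have e : (Fin.succAbove 1 2 : Fin 4) = 3 := by decide
    simp [Matrix.det_succ_row_zero, Fin.sum_univ_succ, e]
    ring
  have hu : IsUnit (M.submatrix ![2,4,5,6] ![2,4,5,6]) := by
    rw [Matrix.isUnit_iff_isUnit_det, isUnit_iff_ne_zero, hdet]
    exact mul_ne_zero hd (mul_ne_zero h55 h66)
  have hr : (M.submatrix ![2,4,5,6] ![2,4,5,6]).rank = 4 := by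
    rw [Matrix.rank_of_isUnit _ hu, Fintype.card_fin]
  calc (4 : ℕ) = (M.submatrix ![2,4,5,6] ![2,4,5,6]).rank := hr.symm
    _ ≤ M.rank := rank_submatrix_le'_s7 M _ _

/-- Matrix whose columns are a vector representation of G1092 in ℂ⁴. -/
noncomputable def Agram : Matrix (Fin 4) (Fin 7) ℂ :=
  !![1, 1, 0, 1, 0, 1, 0;
    -1, 1, 0, 1, 0, 0, 1;
     0,-2, 1, 1, 1, 0, 0;
     1, 1, 0, 0, 1, 0, 0]

/-- The Gram matrix of the columns of `Agram`. -/
noncomputable def Mgram : Matrix (Fin 7) (Fin 7) ℂ := Agramᴴ * Agram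

lemma Mgram_hasGraph : HasGraphG1092 Mgram := by
  intro i j hij
  fin_cases i <;> fin_cases j <;>
    first
      | exact absurd rfl hij
      | (refine iff_of_true ?_ ?_
         · simp only [Mgram, Agram, Matrix.mul_apply, Matrix.conjTranspose_apply,
             Matrix.of_apply, Fin.sum_univ_four, v4_0, v4_1, v4_2, v4_3,
             v7_0, v7_1, v7_2, v7_3, v7_4, v7_5, v7_6]
           norm_num
         · simp only [edgesG1092, Set.mem_insert_iff, Set.mem_singleton_iff]; decide)
      | (refine iff_of_false ?_ ?_
         · simp only [ne_eq, not_not, Mgram, Agram, Matrix.mul_apply, Matrix.conjTranspose_apply,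
             Matrix.of_apply, Fin.sum_univ_four, v4_0, v4_1, v4_2, v4_3,
             v7_0, v7_1, v7_2, v7_3, v7_4, v7_5, v7_6]
           norm_num
         · simp only [edgesG1092, Set.mem_insert_iff, Set.mem_singleton_iff]; decide)

/-- msr(G1092) = 4. -/
theorem msr_G1092 :
    (∃ M : Matrix (Fin 7) (Fin 7) ℂ, M.PosSemidef ∧ HasGraphG1092 M ∧ M.rank = 4) ∧
    (∀ M : Matrix (Fin 7) (Fin 7) ℂ, M.PosSemidef → HasGraphG1092 M → 4 ≤ M.rank) := by
  constructor
  · refine ⟨Mgram, Matrix.posSemidef_conjTranspose_mul_self Agram, Mgram_hasGraph, ?_⟩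
    refine le_antisymm ?_ (lowerG1092 Mgram
      (Matrix.posSemidef_conjTranspose_mul_self Agram) Mgram_hasGraph)
    calc Mgram.rank = Agram.rank := Matrix.rank_conjTranspose_mul_self Agram
      _ ≤ Fintype.card (Fin 4) := Agram.rank_le_card_height
      _ = 4 := Fintype.card_fin 4
  · exact lowerG1092
end

section
/- Let G be the simple graph on vertex set {1,...,7} with edge set E = {{1,2},{1,4},{1,5},{1,6},{1,7},{2,3},{2,4},{2,5},{2,6},{2,7},{3,5},{3,6},{4,5},{4,7},{5,6},{6,7}} (the graph G1222 of the atlas). Then msr(G) = 3; that is, there exists a 7×7 Hermitian positive semidefinite complex matrix with graph G of rank 3, and every 7×7 Hermitian positive semidefinite complex matrix with graph G has rank at least 3. -/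
open Matrix ComplexOrder

/-- The edge set of the graph G1222 on vertices 1,...,7. -/
def edgesG1222 : Set (Sym2 ℕ) :=
  {s(1, 2), s(1, 4), s(1, 5), s(1, 6), s(1, 7), s(2, 3), s(2, 4), s(2, 5), s(2, 6), s(2, 7), s(3, 5), s(3, 6), s(4, 5), s(4, 7), s(5, 6), s(6, 7)}

/-- `M` has graph G1222: for `i ≠ j`, `M i j ≠ 0` iff `{i+1, j+1}` is an edge of G1222. -/
def HasGraphG1222 (M : Matrix (Fin 7) (Fin 7) ℂ) : Prop :=
  ∀ i j : Fin 7, i ≠ j → (M i j ≠ 0 ↔ s((i : ℕ) + 1, (j : ℕ) + 1) ∈ edgesG1222)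

/-- An explicit 3×7 matrix whose Gram matrix realizes G1222. -/
def Ag : Matrix (Fin 3) (Fin 7) ℂ :=
  !![-1, 0, 0, 1, -1, -1, 0;
     -1, 0, -1, -1, 1, 0, 1;
      1, 1, -1, 1, 1, 1, -1]

/-- The Gram matrix of the columns of `Ag`. -/
def Mg : Matrix (Fin 7) (Fin 7) ℂ :=
  !![ 3,  1,  0,  1,  1,  2, -2;
      1,  1, -1,  1,  1,  1, -1;
      0, -1,  2,  0, -2, -1,  0;
      1,  1,  0,  3, -1,  0, -2;
      1,  1, -2, -1,  3,  2,  0;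
      2,  1, -1,  0,  2,  2, -1;
     -2, -1,  0, -2,  0, -1,  2]

set_option maxHeartbeats 1000000 in
lemma hMg : Agᴴ * Ag = Mg := by
  ext i j
  fin_cases i <;> fin_cases j <;>
    norm_num [Ag, Mg, Matrix.mul_apply, Fin.sum_univ_succ]

set_option maxHeartbeats 1000000 in
lemma hasGraph_Mg : HasGraphG1222 (Agᴴ * Ag) := by
  rw [hMg]
  intro i j hij
  fin_cases i <;> fin_cases j <;>
    simp only [edgesG1222, Set.mem_insert_iff, Set.mem_singleton_iff] <;>
    first
    | exact absurd rfl hij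
    | exact iff_of_true (by norm_num [Mg]) (by decide)
    | exact iff_of_false (by norm_num [Mg]) (by decide)

lemma msr_G1222_lower :
    ∀ M : Matrix (Fin 7) (Fin 7) ℂ, M.PosSemidef → HasGraphG1222 M → 3 ≤ M.rank := by
  intro M hpsd hg
  by_contra hlt
  push_neg at hlt
  obtain ⟨B, rfl⟩ : ∃ B : Matrix (Fin 7) (Fin 7) ℂ, M = Bᴴ * B := by
    open scoped MatrixOrder in
    exact CStarAlgebra.nonneg_iff_eq_star_mul_self.mp hpsd.nonneg
  rw [Matrix.rank_conjTranspose_mul_self] at hlt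
  set M : Matrix (Fin 7) (Fin 7) ℂ := Bᴴ * B with hM
  -- columns of B
  set v : Fin 7 → (Fin 7 → ℂ) := fun i k => B k i with hv
  have hMij : ∀ i j, M i j = star (v i) ⬝ᵥ v j := by
    intro i j
    simp [hM, hv, Matrix.mul_apply, dotProduct, Matrix.conjTranspose_apply]
  have hvmem : ∀ i, v i ∈ LinearMap.range B.mulVecLin := by
    intro i
    exact ⟨Pi.single i 1, by ext k; simp [Matrix.mulVecLin, Matrix.mulVec_single, hv]⟩
  -- graph facts
  have h20 : M 2 0 = 0 := by
    by_contra h; have := (hg 2 0 (by decide)).mp h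
    simp only [edgesG1222, Set.mem_insert_iff, Set.mem_singleton_iff] at this
    revert this; decide
  have h23 : M 2 3 = 0 := by
    by_contra h; have := (hg 2 3 (by decide)).mp h
    simp only [edgesG1222, Set.mem_insert_iff, Set.mem_singleton_iff] at this
    revert this; decide
  have h35 : M 3 5 = 0 := by
    by_contra h; have := (hg 3 5 (by decide)).mp h
    simp only [edgesG1222, Set.mem_insert_iff, Set.mem_singleton_iff] at this
    revert this; decide
  have h24 : M 2 4 ≠ 0 := by
    apply (hg 2 4 (by decide)).mpr
    simp only [edgesG1222, Set.mem_insert_iff, Set.mem_singleton_iff]; decide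
  have h34 : M 3 4 ≠ 0 := by
    apply (hg 3 4 (by decide)).mpr
    simp only [edgesG1222, Set.mem_insert_iff, Set.mem_singleton_iff]; decide
  have h05 : M 0 5 ≠ 0 := by
    apply (hg 0 5 (by decide)).mpr
    simp only [edgesG1222, Set.mem_insert_iff, Set.mem_singleton_iff]; decide
  -- nonzero columns
  have hv2 : v 2 ≠ 0 := by
    intro h; apply h24; rw [hMij, h]; simp
  have hv3 : v 3 ≠ 0 := by
    intro h; apply h34; rw [hMij, h]; simp
  have h22 : star (v 2) ⬝ᵥ v 2 ≠ 0 :=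
    fun h => hv2 (dotProduct_star_self_eq_zero.mp h)
  have h33 : star (v 3) ⬝ᵥ v 3 ≠ 0 :=
    fun h => hv3 (dotProduct_star_self_eq_zero.mp h)
  have h23' : star (v 2) ⬝ᵥ v 3 = 0 := by rw [← hMij]; exact h23
  have h32' : star (v 3) ⬝ᵥ v 2 = 0 := by
    have := congrArg star h23'
    rwa [star_dotProduct, star_star, star_zero] at this
  -- v 2, v 3 are linearly independent
  have hli : LinearIndependent ℂ ![v 2, v 3] := by
    rw [LinearIndependent.pair_iff]
    intro a b hab
    have h1 : star (v 2) ⬝ᵥ (a • v 2 + b • v 3) = a * (star (v 2) ⬝ᵥ v 2) := by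
      simp [dotProduct_add, dotProduct_smul, h23', smul_eq_mul]
    have h2 : star (v 3) ⬝ᵥ (a • v 2 + b • v 3) = b * (star (v 3) ⬝ᵥ v 3) := by
      simp [dotProduct_add, dotProduct_smul, h32', smul_eq_mul]
    rw [hab] at h1 h2
    simp only [dotProduct_zero] at h1 h2
    exact ⟨(mul_eq_zero.mp h1.symm).resolve_right h22,
      (mul_eq_zero.mp h2.symm).resolve_right h33⟩
  -- the span of v2, v3 is the whole column space
  set W := LinearMap.range B.mulVecLin with hW
  have hspan : Submodule.span ℂ {v 2, v 3} = W := by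
    apply Submodule.eq_of_le_of_finrank_le
    · rw [Submodule.span_le]
      rintro x (rfl | rfl)
      · exact hvmem 2
      · exact hvmem 3
    · have hcard : Module.finrank ℂ (Submodule.span ℂ (Set.range ![v 2, v 3])) = 2 := by
        rw [finrank_span_eq_card hli]; simp
      have hrange : Set.range ![v 2, v 3] = {v 2, v 3} := by
        ext x; simp [Fin.exists_fin_two]; tauto
      rw [hrange] at hcard
      rw [hcard]
      have : Module.finrank ℂ ↥W = B.rank := rfl
      omega
  -- decompose v 0 and v 5
  obtain ⟨a, b, hab⟩ := Submodule.mem_span_pair.mp (hspan ▸ hvmem 0)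
  obtain ⟨c, d, hcd⟩ := Submodule.mem_span_pair.mp (hspan ▸ hvmem 5)
  have ha0 : a = 0 := by
    have h0 : star (v 2) ⬝ᵥ v 0 = 0 := by rw [← hMij]; exact h20
    rw [← hab] at h0
    simp only [dotProduct_add, dotProduct_smul, h23', smul_eq_mul,
      mul_zero, add_zero] at h0
    exact (mul_eq_zero.mp h0).resolve_right h22
  have hd0 : d = 0 := by
    have h0 : star (v 3) ⬝ᵥ v 5 = 0 := by rw [← hMij]; exact h35
    rw [← hcd] at h0
    simp only [dotProduct_add, dotProduct_smul, h32', smul_eq_mul,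
      mul_zero, zero_add] at h0
    exact (mul_eq_zero.mp h0).resolve_right h33
  apply h05
  rw [hMij, ← hab, ← hcd, ha0, hd0]
  simp [add_dotProduct, dotProduct_add, smul_dotProduct,
    dotProduct_smul, star_smul, h32', smul_eq_mul]

/-- msr(G1222) = 3. -/
theorem msr_G1222 :
    (∃ M : Matrix (Fin 7) (Fin 7) ℂ, M.PosSemidef ∧ HasGraphG1222 M ∧ M.rank = 3) ∧
    (∀ M : Matrix (Fin 7) (Fin 7) ℂ, M.PosSemidef → HasGraphG1222 M → 3 ≤ M.rank) := by
  refine ⟨⟨Agᴴ * Ag, Matrix.posSemidef_conjTranspose_mul_self Ag, hasGraph_Mg, ?_⟩,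
    msr_G1222_lower⟩
  refine le_antisymm ?_ ?_
  · rw [Matrix.rank_conjTranspose_mul_self]
    exact le_trans (Matrix.rank_le_card_height Ag) (by simp)
  · exact msr_G1222_lower _ (Matrix.posSemidef_conjTranspose_mul_self Ag) hasGraph_Mg
end

section
/- Let G be the simple graph on vertex set {1,...,7} with edge set E = {{1,2},{1,4},{1,6},{1,7},{2,3},{2,4},{2,5},{2,6},{2,7},{3,5},{3,6},{3,7},{4,5},{4,6},{5,7},{6,7}} (the graph G1228 of the atlas). Then msr(G) = 3; that is, there exists a 7×7 Hermitian positive semidefinite complex matrix with graph G of rank 3, and every 7×7 Hermitian positive semidefinite complex matrix with graph G has rank at least 3. -/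
open Matrix ComplexOrder

/-- The edge set of the graph G1228 on vertices 1,...,7. -/
def edgesG1228 : Set (Sym2 ℕ) :=
  {s(1, 2), s(1, 4), s(1, 6), s(1, 7), s(2, 3), s(2, 4), s(2, 5), s(2, 6), s(2, 7), s(3, 5), s(3, 6), s(3, 7), s(4, 5), s(4, 6), s(5, 7), s(6, 7)}

/-- `M` has graph G1228: for `i ≠ j`, `M i j ≠ 0` iff `{i+1, j+1}` is an edge of G1228. -/
def HasGraphG1228 (M : Matrix (Fin 7) (Fin 7) ℂ) : Prop :=
  ∀ i j : Fin 7, i ≠ j → (M i j ≠ 0 ↔ s((i : ℕ) + 1, (j : ℕ) + 1) ∈ edgesG1228)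

lemma aux_rank_submatrix_le {m n p q : Type*} [Fintype m] [Fintype n] [Fintype p] [Fintype q]
    [DecidableEq m] [DecidableEq n] (A : Matrix m n ℂ) (f : p → m) (g : q → n) :
    (A.submatrix f g).rank ≤ A.rank := by
  have h : A.submatrix f g =
      ((1 : Matrix m m ℂ).submatrix f (Equiv.refl m)) * A *
        ((1 : Matrix n n ℂ).submatrix (Equiv.refl n) g) := by
    rw [mul_submatrix_one, one_submatrix_mul]
    simp
  rw [h]
  exact le_trans (Matrix.rank_mul_le_left _ _) (Matrix.rank_mul_le_right _ _)

lemma aux_psd_row_zero {M : Matrix (Fin 7) (Fin 7) ℂ} (h : M.PosSemidef) {i : Fin 7}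
    (hi : M i i = 0) (j : Fin 7) : M i j = 0 := by
  have h0 : star (Pi.single i 1 : Fin 7 → ℂ) ⬝ᵥ M *ᵥ Pi.single i 1 = 0 := by
    simp [Matrix.mulVec_single, dotProduct, Pi.single_apply, hi,
      apply_ite (fun z : ℂ => star z)]
  have h1 := (h.dotProduct_mulVec_zero_iff (Pi.single i 1)).mp h0
  have h2 := congrFun h1 j
  simp [Matrix.mulVec_single] at h2
  rw [← h.1.apply i j, h2, star_zero]

lemma vec3_0 {α : Type*} (x₀ x₁ x₂ : α) : ![x₀,x₁,x₂] (0:Fin 3) = x₀ := rfl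
lemma vec3_1 {α : Type*} (x₀ x₁ x₂ : α) : ![x₀,x₁,x₂] (1:Fin 3) = x₁ := rfl
lemma vec3_2 {α : Type*} (x₀ x₁ x₂ : α) : ![x₀,x₁,x₂] (2:Fin 3) = x₂ := rfl

lemma vec7_0 {α : Type*} (x₀ x₁ x₂ x₃ x₄ x₅ x₆ : α) : ![x₀,x₁,x₂,x₃,x₄,x₅,x₆] (0:Fin 7) = x₀ := rfl
lemma vec7_1 {α : Type*} (x₀ x₁ x₂ x₃ x₄ x₅ x₆ : α) : ![x₀,x₁,x₂,x₃,x₄,x₅,x₆] (1:Fin 7) = x₁ := rfl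
lemma vec7_2 {α : Type*} (x₀ x₁ x₂ x₃ x₄ x₅ x₆ : α) : ![x₀,x₁,x₂,x₃,x₄,x₅,x₆] (2:Fin 7) = x₂ := rfl
lemma vec7_3 {α : Type*} (x₀ x₁ x₂ x₃ x₄ x₅ x₆ : α) : ![x₀,x₁,x₂,x₃,x₄,x₅,x₆] (3:Fin 7) = x₃ := rfl
lemma vec7_4 {α : Type*} (x₀ x₁ x₂ x₃ x₄ x₅ x₆ : α) : ![x₀,x₁,x₂,x₃,x₄,x₅,x₆] (4:Fin 7) = x₄ := rfl
lemma vec7_5 {α : Type*} (x₀ x₁ x₂ x₃ x₄ x₅ x₆ : α) : ![x₀,x₁,x₂,x₃,x₄,x₅,x₆] (5:Fin 7) = x₅ := rfl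
lemma vec7_6 {α : Type*} (x₀ x₁ x₂ x₃ x₄ x₅ x₆ : α) : ![x₀,x₁,x₂,x₃,x₄,x₅,x₆] (6:Fin 7) = x₆ := rfl

lemma vec7_0m {α : Type*} (x₀ x₁ x₂ x₃ x₄ x₅ x₆ : α) :
    ![x₀,x₁,x₂,x₃,x₄,x₅,x₆] (⟨0, by norm_num⟩ : Fin 7) = x₀ := rfl
lemma vec7_1m {α : Type*} (x₀ x₁ x₂ x₃ x₄ x₅ x₆ : α) :
    ![x₀,x₁,x₂,x₃,x₄,x₅,x₆] (⟨1, by norm_num⟩ : Fin 7) = x₁ := rfl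
lemma vec7_2m {α : Type*} (x₀ x₁ x₂ x₃ x₄ x₅ x₆ : α) :
    ![x₀,x₁,x₂,x₃,x₄,x₅,x₆] (⟨2, by norm_num⟩ : Fin 7) = x₂ := rfl
lemma vec7_3m {α : Type*} (x₀ x₁ x₂ x₃ x₄ x₅ x₆ : α) :
    ![x₀,x₁,x₂,x₃,x₄,x₅,x₆] (⟨3, by norm_num⟩ : Fin 7) = x₃ := rfl
lemma vec7_4m {α : Type*} (x₀ x₁ x₂ x₃ x₄ x₅ x₆ : α) :
    ![x₀,x₁,x₂,x₃,x₄,x₅,x₆] (⟨4, by norm_num⟩ : Fin 7) = x₄ := rfl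
lemma vec7_5m {α : Type*} (x₀ x₁ x₂ x₃ x₄ x₅ x₆ : α) :
    ![x₀,x₁,x₂,x₃,x₄,x₅,x₆] (⟨5, by norm_num⟩ : Fin 7) = x₅ := rfl
lemma vec7_6m {α : Type*} (x₀ x₁ x₂ x₃ x₄ x₅ x₆ : α) :
    ![x₀,x₁,x₂,x₃,x₄,x₅,x₆] (⟨6, by norm_num⟩ : Fin 7) = x₆ := rfl

lemma fin7v_0 : (((0:Fin 7)) : ℕ) = 0 := rfl
lemma fin7v_1 : (((1:Fin 7)) : ℕ) = 1 := rfl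
lemma fin7v_2 : (((2:Fin 7)) : ℕ) = 2 := rfl
lemma fin7v_3 : (((3:Fin 7)) : ℕ) = 3 := rfl
lemma fin7v_4 : (((4:Fin 7)) : ℕ) = 4 := rfl
lemma fin7v_5 : (((5:Fin 7)) : ℕ) = 5 := rfl
lemma fin7v_6 : (((6:Fin 7)) : ℕ) = 6 := rfl

def Bmat : Matrix (Fin 3) (Fin 7) ℂ :=
  !![1,1,0,1,0,1,1; 0,1,1,0,1,2,3; 0,1,0,1,1,-2,-1]

set_option maxHeartbeats 1000000 in
/-- msr(G1228) = 3. -/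
theorem msr_G1228 :
    (∃ M : Matrix (Fin 7) (Fin 7) ℂ, M.PosSemidef ∧ HasGraphG1228 M ∧ M.rank = 3) ∧
    (∀ M : Matrix (Fin 7) (Fin 7) ℂ, M.PosSemidef → HasGraphG1228 M → 3 ≤ M.rank) := by
  constructor
  · refine ⟨Bmatᴴ * Bmat, Matrix.posSemidef_conjTranspose_mul_self _, ?_, ?_⟩
    · have hM : Bmatᴴ * Bmat =
        !![1,1,0,1,0,1,1;
           1,3,1,2,2,1,3;
           0,1,1,0,1,2,3;
           1,2,0,2,1,-1,0;
           0,2,1,1,2,0,2;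
           1,1,2,-1,0,9,9;
           1,3,3,0,2,9,11] := by
        ext i j
        fin_cases i <;> fin_cases j <;>
          simp only [Bmat, Matrix.conjTranspose_apply, Matrix.mul_apply, Fin.sum_univ_three,
            Matrix.of_apply, vec3_0, vec3_1, vec3_2, vec7_0, vec7_1, vec7_2, vec7_3, vec7_4,
            vec7_5, vec7_6, _root_.map_one, _root_.map_zero, _root_.map_ofNat, _root_.map_neg] <;> norm_num
      intro i j hij
      rw [hM]
      fin_cases i <;> fin_cases j <;>
        first
        | exact absurd rfl hij
        | (clear hij
           simp only [Matrix.of_apply, vec7_0, vec7_1, vec7_2, vec7_3, vec7_4, vec7_5, vec7_6,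
             vec7_0m, vec7_1m, vec7_2m, vec7_3m, vec7_4m, vec7_5m, vec7_6m]
           simp [edgesG1228])
    · rw [Matrix.rank_conjTranspose_mul_self]
      refine le_antisymm (Matrix.rank_le_card_height _) ?_
      have h3 : (Bmat.submatrix id ![0,2,3]).rank = 3 := by
        have hu : IsUnit (Bmat.submatrix id ![0,2,3]) := by
          rw [Matrix.isUnit_iff_isUnit_det]
          have : (Bmat.submatrix id ![0,2,3]).det = 1 := by
            simp [Matrix.det_fin_three, Bmat, vec3_0, vec3_1, vec3_2, vec7_0, vec7_2, vec7_3, Matrix.vecHead, Matrix.vecTail]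
          rw [this]; exact isUnit_one
        simpa using Matrix.rank_of_isUnit _ hu
      calc (3 : ℕ) = (Bmat.submatrix id ![0,2,3]).rank := h3.symm
        _ ≤ Bmat.rank := aux_rank_submatrix_le _ _ _
  · intro M hpsd hgr
    have z02 : M 0 2 = 0 := by
      by_contra h
      have := (hgr 0 2 (by decide)).mp h
      simp [edgesG1228, fin7v_0, fin7v_1, fin7v_2, fin7v_3, fin7v_4, fin7v_5, fin7v_6] at this
    have z04 : M 0 4 = 0 := by
      by_contra h
      have := (hgr 0 4 (by decide)).mp h
      simp [edgesG1228, fin7v_0, fin7v_1, fin7v_2, fin7v_3, fin7v_4, fin7v_5, fin7v_6] at this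
    have z32 : M 3 2 = 0 := by
      by_contra h
      have := (hgr 3 2 (by decide)).mp h
      simp [edgesG1228, fin7v_0, fin7v_1, fin7v_2, fin7v_3, fin7v_4, fin7v_5, fin7v_6] at this
    have e01 : M 0 1 ≠ 0 := (hgr 0 1 (by decide)).mpr (by simp [edgesG1228] <;> decide)
    have e24 : M 2 4 ≠ 0 := (hgr 2 4 (by decide)).mpr (by simp [edgesG1228] <;> decide)
    have e34 : M 3 4 ≠ 0 := (hgr 3 4 (by decide)).mpr (by simp [edgesG1228] <;> decide)
    have d0 : M 0 0 ≠ 0 := fun h => e01 (aux_psd_row_zero hpsd h 1)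
    have d2 : M 2 2 ≠ 0 := fun h => e24 (aux_psd_row_zero hpsd h 4)
    have hdet : (M.submatrix ![0,2,3] ![0,2,4]).det = M 0 0 * (M 2 2 * M 3 4) := by
      rw [Matrix.det_fin_three]
      simp [z02, z04, z32, mul_assoc]
    have hu : IsUnit (M.submatrix ![0,2,3] ![0,2,4]) := by
      rw [Matrix.isUnit_iff_isUnit_det, hdet]
      exact isUnit_iff_ne_zero.mpr (mul_ne_zero d0 (mul_ne_zero d2 e34))
    have h3 : (M.submatrix ![0,2,3] ![0,2,4]).rank = 3 := by
      simpa using Matrix.rank_of_isUnit _ hu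
    calc (3 : ℕ) = (M.submatrix ![0,2,3] ![0,2,4]).rank := h3.symm
      _ ≤ M.rank := aux_rank_submatrix_le _ _ _
end

section
/- Let G be the simple graph on vertex set {1,...,7} with edge set E = {{1,2},{1,4},{1,5},{1,6},{1,7},{2,3},{2,4},{2,5},{2,6},{2,7},{3,4},{3,5},{3,6},{3,7},{4,5},{6,7}} (the graph G1230 of the atlas). Then msr(G) = 2; that is, there exists a 7×7 Hermitian positive semidefinite complex matrix with graph G of rank 2, and every 7×7 Hermitian positive semidefinite complex matrix with graph G has rank at least 2. -/
open Matrix ComplexOrder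

/-- The edge set of the graph G1230 on vertices 1,...,7. -/
def edgesG1230 : Set (Sym2 ℕ) :=
  {s(1, 2), s(1, 4), s(1, 5), s(1, 6), s(1, 7), s(2, 3), s(2, 4), s(2, 5), s(2, 6), s(2, 7), s(3, 4), s(3, 5), s(3, 6), s(3, 7), s(4, 5), s(6, 7)}

/-- `M` has graph G1230: for `i ≠ j`, `M i j ≠ 0` iff `{i+1, j+1}` is an edge of G1230. -/
def HasGraphG1230 (M : Matrix (Fin 7) (Fin 7) ℂ) : Prop :=
  ∀ i j : Fin 7, i ≠ j → (M i j ≠ 0 ↔ s((i : ℕ) + 1, (j : ℕ) + 1) ∈ edgesG1230)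

/-- The 7×2 factor whose Gram matrix realizes G1230 with rank 2. -/
def factorA : Matrix (Fin 7) (Fin 2) ℂ :=
  !![1, 1; 1, 2; 1, -1; 1, 0; 1, 0; 0, 1; 0, 1]

lemma diag_ne_zero_of_posSemidef {M : Matrix (Fin 7) (Fin 7) ℂ} (hM : M.PosSemidef)
    {i j : Fin 7} (h : M j i ≠ 0) : M i i ≠ 0 := by
  intro h0
  have key : M *ᵥ Pi.single i 1 = 0 := by
    rw [← hM.dotProduct_mulVec_zero_iff]
    simp [dotProduct, mulVec, h0, Pi.single_apply, Finset.sum_ite_eq]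
  have : M j i = 0 := by
    have := congrFun key j
    simpa [mulVec, dotProduct, Pi.single_apply, Finset.sum_ite_eq] using this
  exact h this

lemma lower_bound (M : Matrix (Fin 7) (Fin 7) ℂ) (hPSD : M.PosSemidef)
    (hG : HasGraphG1230 M) : 2 ≤ M.rank := by
  have h10 : M 1 0 ≠ 0 := by
    rw [hG 1 0 (by decide)]
    simp only [edgesG1230, Set.mem_insert_iff, Set.mem_singleton_iff, Sym2.eq_iff]
    norm_num
  have h32 : M 3 2 ≠ 0 := by
    rw [hG 3 2 (by decide)]
    simp only [edgesG1230, Set.mem_insert_iff, Set.mem_singleton_iff, Sym2.eq_iff]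
    norm_num
  have h00 : M 0 0 ≠ 0 := diag_ne_zero_of_posSemidef hPSD h10
  have h22 : M 2 2 ≠ 0 := diag_ne_zero_of_posSemidef hPSD h32
  have h02 : M 0 2 = 0 := by
    by_contra h
    have hm := (hG 0 2 (by decide)).mp h
    simp only [edgesG1230, Set.mem_insert_iff, Set.mem_singleton_iff, Sym2.eq_iff] at hm
    norm_num at hm
  have h20 : M 2 0 = 0 := by
    by_contra h
    have hm := (hG 2 0 (by decide)).mp h
    simp only [edgesG1230, Set.mem_insert_iff, Set.mem_singleton_iff, Sym2.eq_iff] at hm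
    norm_num at hm
  set v0 : Fin 7 → ℂ := M *ᵥ Pi.single 0 1 with hv0
  set v2 : Fin 7 → ℂ := M *ᵥ Pi.single 2 1 with hv2
  have hv0e : ∀ k, v0 k = M k 0 := by
    intro k; simp [hv0, mulVec, dotProduct, Pi.single_apply, Finset.sum_ite_eq]
  have hv2e : ∀ k, v2 k = M k 2 := by
    intro k; simp [hv2, mulVec, dotProduct, Pi.single_apply, Finset.sum_ite_eq]
  have hLI : LinearIndependent ℂ ![v0, v2] := by
    rw [LinearIndependent.pair_iff]
    intro s t hst
    have e0 := congrFun hst 0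
    have e2 := congrFun hst 2
    simp [hv0e, hv2e, h02, h20] at e0 e2
    constructor
    · rcases e0 with h | h
      · exact h
      · exact absurd h h00
    · rcases e2 with h | h
      · exact h
      · exact absurd h h22
  have hspan : Submodule.span ℂ (Set.range ![v0, v2]) ≤ LinearMap.range M.mulVecLin := by
    rw [Submodule.span_le]
    rintro x ⟨k, rfl⟩
    fin_cases k
    · exact ⟨Pi.single 0 1, rfl⟩
    · exact ⟨Pi.single 2 1, rfl⟩
  have h2 : Module.finrank ℂ (Submodule.span ℂ (Set.range ![v0, v2])) = 2 := by
    rw [finrank_span_eq_card hLI]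
    simp
  calc (2 : ℕ) = Module.finrank ℂ (Submodule.span ℂ (Set.range ![v0, v2])) := h2.symm
    _ ≤ Module.finrank ℂ (LinearMap.range M.mulVecLin) := Submodule.finrank_mono hspan
    _ = M.rank := rfl

set_option maxHeartbeats 1600000 in
lemma hasGraph_factor : HasGraphG1230 (factorA * factorAᴴ) := by
  intro i j hij
  fin_cases i <;> fin_cases j <;>
    first
      | (exact absurd rfl hij)
      | (simp only [factorA, Matrix.mul_apply, Fin.sum_univ_two, conjTranspose_apply,
          Matrix.cons_val', Matrix.cons_val_zero, Matrix.cons_val_one, Matrix.head_cons,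
          Matrix.cons_val_succ, Matrix.empty_val', Matrix.cons_val_fin_one, Matrix.head_fin_const,
          _root_.map_one, _root_.map_zero, _root_.map_neg, Complex.conj_ofNat,
          edgesG1230, Set.mem_insert_iff, Set.mem_singleton_iff, Sym2.eq_iff]
         norm_num)

/-- msr(G1230) = 2. -/
theorem msr_G1230 :
    (∃ M : Matrix (Fin 7) (Fin 7) ℂ, M.PosSemidef ∧ HasGraphG1230 M ∧ M.rank = 2) ∧
    (∀ M : Matrix (Fin 7) (Fin 7) ℂ, M.PosSemidef → HasGraphG1230 M → 2 ≤ M.rank) := by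
  refine ⟨?_, lower_bound⟩
  refine ⟨factorA * factorAᴴ, posSemidef_self_mul_conjTranspose _, hasGraph_factor, ?_⟩
  refine le_antisymm ?_ (lower_bound _ (posSemidef_self_mul_conjTranspose _) hasGraph_factor)
  calc (factorA * factorAᴴ).rank ≤ factorA.rank := rank_mul_le_left _ _
    _ ≤ 2 := rank_le_card_width _
end
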